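/- arXiv:1409.8480 — 2 statements merged into one kernel-verified Lean document; each statement's English description precedes it below -/
import Mathlib

section
/- The null space of Λ is contained in the symmetric subspace: every v ∈ ℂ^N ⊗ ℂ^N with Λv = 0 satisfies P·v = v, where P is the swap operator determined by P(x ⊗ y) = y ⊗ x. -/
open Matrix Kronecker Finset
open scoped ComplexOrder

noncomputable section

/-- A Majorana family: `2*m` Hermitian `2^m × 2^m` complex matrices squaring to the
identity and pairwise anticommuting. -/
structure MajoranaFamily (m : ℕ) where
  c : Fin (2*m) → Matrix (Fin (2^m)) (Fin (2^m)) ℂ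
  herm : ∀ j, (c j).IsHermitian
  sq : ∀ j, c j * c j = 1
  anticomm : ∀ j k, j ≠ k → c j * c k = -(c k * c j)

abbrev Mat (m : ℕ) := Matrix (Fin (2^m)) (Fin (2^m)) ℂ
abbrev Mat2 (m : ℕ) := Matrix (Fin (2^m) × Fin (2^m)) (Fin (2^m) × Fin (2^m)) ℂ
abbrev MatN (m n : ℕ) := Matrix (Fin n → Fin (2^m)) (Fin n → Fin (2^m)) ℂ

variable {m : ℕ}

/-- A state: a positive semidefinite matrix of trace `1`. -/
def IsState {ι : Type*} [Fintype ι] (ρ : Matrix ι ι ℂ) : Prop :=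
  ρ.PosSemidef ∧ ρ.trace = 1

/-- The trace norm `‖X‖₁ = Tr √(XᴴX)`. -/
def traceNorm {ι : Type*} [Fintype ι] [DecidableEq ι] (X : Matrix ι ι ℂ) : ℝ :=
  (((Matrix.posSemidef_conjTranspose_mul_self X).1.eigenvectorUnitary.1 *
    diagonal (((↑) : ℝ → ℂ) ∘ Real.sqrt ∘ (Matrix.posSemidef_conjTranspose_mul_self X).1.eigenvalues) *
    (star (Matrix.posSemidef_conjTranspose_mul_self X).1.eigenvectorUnitary : Matrix ι ι ℂ)).trace).re

/-- The rotated Majorana operators `c̃_j = Σ_i R_{ij} c_i`. -/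
def tilde (F : MajoranaFamily m) (R : Matrix (Fin (2*m)) (Fin (2*m)) ℝ)
    (j : Fin (2*m)) : Mat m :=
  ∑ i, (R i j : ℂ) • F.c i

/-- Standard-form Gaussian state `2^{-m} ∏_{k=1}^m (I + i λ_k c̃_{2k-1} c̃_{2k})`
(ordered product; the factors commute). -/
def gaussStd (F : MajoranaFamily m) (R : Matrix (Fin (2*m)) (Fin (2*m)) ℝ)
    (lam : Fin m → ℝ) : Mat m :=
  ((2:ℂ)^m)⁻¹ • (List.ofFn (fun k : Fin m =>
    (1 : Mat m) + (Complex.I * (lam k : ℂ)) •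
      (tilde F R ⟨2*k.val, by omega⟩ * tilde F R ⟨2*k.val+1, by omega⟩))).prod

/-- A pure Gaussian state: a standard-form Gaussian state with all `λ_k ∈ {-1,1}`,
for some `R ∈ SO(2m,ℝ)`. -/
def IsPureGaussian (F : MajoranaFamily m) (ρ : Mat m) : Prop :=
  ∃ (R : Matrix (Fin (2*m)) (Fin (2*m)) ℝ) (lam : Fin m → ℝ),
    Rᵀ * R = 1 ∧ R.det = 1 ∧ (∀ k, lam k = 1 ∨ lam k = -1) ∧ ρ = gaussStd F R lam

/-- A convex-Gaussian state: a finite convex combination of pure Gaussian states. -/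
def IsConvexGaussian (F : MajoranaFamily m) (ρ : Mat m) : Prop :=
  ∃ (k : ℕ) (p : Fin k → ℝ) (g : Fin k → Mat m),
    (∀ i, 0 ≤ p i) ∧ (∑ i, p i) = 1 ∧ (∀ i, IsPureGaussian F (g i)) ∧
    ρ = ∑ i, p i • g i

/-- `Λ = Σ_j c_j ⊗ c_j` on `ℂ^N ⊗ ℂ^N`. -/
def Lambda (F : MajoranaFamily m) : Mat2 m := ∑ j, F.c j ⊗ₖ F.c j

/-- Ordered product `c_{a_1} ⋯ c_{a_r}` over a finite set `S = {a_1 < … < a_r}`. -/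
def majProd (F : MajoranaFamily m) (S : Finset (Fin (2*m))) : Mat m :=
  ((S.sort (· ≤ ·)).map F.c).prod

/-- An even operator: a complex linear combination of the identity and products of
an even number of distinct Majorana operators. -/
def IsEven (F : MajoranaFamily m) (X : Mat m) : Prop :=
  X ∈ Submodule.span ℂ {Y : Mat m | ∃ S : Finset (Fin (2*m)), Even S.card ∧ Y = majProd F S}

/-- The Hermitian correlator `i^k c_{a_1} ⋯ c_{a_{2k}}` associated to a set of
cardinality `2k`. -/
def corrOp (F : MajoranaFamily m) (S : Finset (Fin (2*m))) : Mat m :=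
  (Complex.I ^ (S.card / 2)) • majProd F S

/-- The operator acting as `A` on the `k`-th tensor factor of `(ℂ^N)^{⊗n}` and as the
identity on the other factors. -/
def embedAt (n : ℕ) (k : Fin n) (A : Mat m) : MatN m n :=
  fun x y => A (x k) (y k) * ∏ l ∈ Finset.univ.erase k, (if x l = y l then 1 else 0)

/-- `Λ^{k,l} = Σ_j c_j^{(k)} c_j^{(l)}` on `(ℂ^N)^{⊗n}`. -/
def LambdaKL (F : MajoranaFamily m) (n : ℕ) (k l : Fin n) : MatN m n :=
  ∑ j, embedAt n k (F.c j) * embedAt n l (F.c j)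

/-- Partial trace of an operator on `(ℂ^N)^{⊗n}` over the tensor factors `2, …, n`. -/
def ptrRest (n : ℕ) (hn : 1 ≤ n) (ρ : MatN m n) : Mat m := fun a b =>
  ∑ g : Fin (n-1) → Fin (2^m),
    ρ (fun i => if h : i.val = 0 then a else g ⟨i.val - 1, by omega⟩)
      (fun i => if h : i.val = 0 then b else g ⟨i.val - 1, by omega⟩)

/-- `ρ` has an `n`-Gaussian-symmetric extension. -/
def HasGSExt (F : MajoranaFamily m) (n : ℕ) (hn : 1 ≤ n) (ρ : Mat m) : Prop :=
  ∃ ext : MatN m n, IsState ext ∧ ptrRest n hn ext = ρ ∧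
    ∀ k l : Fin n, k ≠ l → LambdaKL F n k l * ext = 0

/-- `‖Λ‖₁ = 2(m+1) C(2m, m+1)`. -/
def lambdaNorm (m : ℕ) : ℝ := 2*(m+1) * (Nat.choose (2*m) (m+1) : ℝ)

/-- `ε(n) = min {2, 10 ‖Λ‖₁² 2^{2m} n^{-1/3}}`. -/
def epsB (m n : ℕ) : ℝ :=
  min 2 (10 * lambdaNorm m ^ 2 * 2^(2*m) / (n:ℝ) ^ ((1:ℝ)/3))

/-- `χ(n) = (ε(n)/2) (2m)!/m!`. -/
def chiB (m n : ℕ) : ℝ :=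
  epsB m n / 2 * ((Nat.factorial (2*m) : ℝ) / (Nat.factorial m : ℝ))

/-- `δ(n) = χ(n)/(1+χ(n))`. -/
def deltaB (m n : ℕ) : ℝ := chiB m n / (1 + chiB m n)

/-- The parity operator `P = i^m c_1 ⋯ c_{2m}`. -/
def parityOp (F : MajoranaFamily m) : Mat m :=
  (Complex.I ^ m) • (((List.finRange (2*m)).map F.c).prod)

/-- The operator `I^{⊗ r} ⊗ c_s ⊗ P^{⊗(n-r-1)}` on `(ℂ^N)^{⊗n}` (0-based position `r`). -/
def dOp (F : MajoranaFamily m) (n : ℕ) (r : Fin n) (s : Fin (2*m)) : MatN m n :=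
  fun x y => ∏ l : Fin n,
    if l < r then (if x l = y l then 1 else 0)
    else if l = r then F.c s (x l) (y l)
    else parityOp F (x l) (y l)

/-- The family `d_1, …, d_{2mn}`, where `d_{2m(r-1)+s} = I^{⊗(r-1)} ⊗ c_s ⊗ P^{⊗(n-r)}`. -/
def dAll (hm : 1 ≤ m) (F : MajoranaFamily m) (n : ℕ) (j : Fin (2*(m*n))) : MatN m n :=
  dOp F n
    ⟨j.val / (2*m), by
      have h1 := j.isLt
      rw [Nat.div_lt_iff_lt_mul (by omega)]
      have h2 : n * (2*m) = 2*(m*n) := by ring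
      omega⟩
    ⟨j.val % (2*m), Nat.mod_lt _ (by omega)⟩

/-- The index `2m(k-1)+j` (0-based: `2mk + j`) into a family of `2mn` Majorana operators. -/
def bigIdx (m n : ℕ) (k : Fin n) (j : Fin (2*m)) : Fin (2*(m*n)) :=
  ⟨2*m*k.val + j.val, by
    have hk : k.val + 1 ≤ n := k.isLt
    have hj := j.isLt
    have h1 : 2*m*(k.val+1) = 2*m*k.val + 2*m := by ring
    have h2 : 2*m*(k.val+1) ≤ 2*m*n := Nat.mul_le_mul le_rfl hk
    have h3 : 2*m*n = 2*(m*n) := by ring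
    omega⟩

/-- `Γ^{k,l} = Σ_{j=1}^{2m} (-1)^{m-j} e_{2m(k-1)+j} · e_{2m(l-1)+1} ⋯ ê_{2m(l-1)+j} ⋯ e_{2ml}`. -/
def GammaKL (m n : ℕ) (E : MajoranaFamily (m*n)) (k l : Fin n) :
    Matrix (Fin (2^(m*n))) (Fin (2^(m*n))) ℂ :=
  ∑ j : Fin (2*m), ((-1:ℂ) ^ ((m:ℤ) - (j.val+1 : ℤ))) •
    (E.c (bigIdx m n k j) *
      (((List.finRange (2*m)).filter (fun i => i ≠ j)).map
        (fun i => E.c (bigIdx m n l i))).prod)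

/-- `C = i^{mn} e_1 ⋯ e_{2mn}`. -/
def bigParity (m n : ℕ) (E : MajoranaFamily (m*n)) :
    Matrix (Fin (2^(m*n))) (Fin (2^(m*n))) ℂ :=
  (Complex.I ^ (m*n)) • (((List.finRange (2*(m*n))).map E.c).prod)

/-- The `n`-fold tensor power `A^{⊗n}` of a matrix on `ℂ^N`. -/
def tpow (n : ℕ) (A : Mat m) : MatN m n := fun x y => ∏ k, A (x k) (y k)



namespace MF
variable {m : ℕ} (F : MajoranaFamily m)

def P (l : List (Fin (2*m))) : Mat m := (l.map F.c).prod

@[simp] lemma P_nil : P F [] = 1 := rfl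
@[simp] lemma P_cons (a : Fin (2*m)) (l : List (Fin (2*m))) :
    P F (a :: l) = F.c a * P F l := by simp [P]

lemma P_append (l₁ l₂ : List (Fin (2*m))) : P F (l₁ ++ l₂) = P F l₁ * P F l₂ := by
  simp [P]

lemma comm_P (l : List (Fin (2*m))) (j : Fin (2*m)) :
    P F l * F.c j = ((-1:ℂ) ^ (l.countP (· ≠ j))) • (F.c j * P F l) := by
  induction l with
  | nil => simp
  | cons a t ih =>
    rw [P_cons, mul_assoc, ih]
    by_cases h : a = j
    · subst h
      have hcnt : List.countP (fun x => decide (x ≠ a)) (a :: t)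
          = List.countP (fun x => decide (x ≠ a)) t := by
        simp [List.countP_cons]
      rw [hcnt, mul_smul_comm, ← mul_assoc]
    · have hc : F.c a * F.c j = -(F.c j * F.c a) := F.anticomm a j h
      have hcnt : List.countP (fun x => decide (x ≠ j)) (a :: t)
          = List.countP (fun x => decide (x ≠ j)) t + 1 := by
        simp [List.countP_cons, h]
      rw [hcnt, mul_smul_comm, ← mul_assoc, hc, neg_mul, smul_neg, pow_succ,
        mul_neg_one, neg_smul, mul_assoc]

lemma conj_P (l : List (Fin (2*m))) (j : Fin (2*m)) :
    F.c j * (P F l * F.c j) = ((-1:ℂ) ^ (l.countP (· ≠ j))) • P F l := by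
  rw [comm_P, mul_smul_comm, ← mul_assoc, F.sq, one_mul]

lemma reverse_P (l : List (Fin (2*m))) (h : l.Nodup) :
    P F l.reverse = ((-1:ℂ) ^ (l.length.choose 2)) • P F l := by
  induction l with
  | nil => simp
  | cons a t ih =>
    have hnd := h
    rw [List.nodup_cons] at hnd
    have hm : a ∉ t := hnd.1
    have hPsingle : P F [a] = F.c a := by simp [P]
    have hcnt : t.reverse.countP (· ≠ a) = t.length := by
      have hal : ∀ x ∈ t.reverse, (fun x => decide (x ≠ a)) x = true := by
        intro x hx
        simp only [List.mem_reverse] at hx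
        simp [ne_of_mem_of_not_mem hx hm]
      rw [List.countP_eq_length.mpr hal, List.length_reverse]
    have hch : (t.length + 1).choose 2 = t.length.choose 2 + t.length := by
      rw [Nat.choose_succ_succ]
      simp [Nat.choose_one_right, Nat.add_comm]
    rw [List.reverse_cons, P_append, hPsingle, comm_P, hcnt, ih hnd.2,
      List.length_cons, hch, P_cons, mul_smul_comm, smul_smul, pow_add]
    ring_nf


lemma sort_insert {S : Finset (Fin (2*m))} {j : Fin (2*m)} (h : j ∉ S) :
    (insert j S).sort (· ≤ ·) = (S.sort (· ≤ ·)).orderedInsert (· ≤ ·) j := by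
  have h1 : ((insert j S).sort (· ≤ ·)).Perm (insert j S).toList :=
    Finset.sort_perm_toList _ _
  have h2 : ((insert j S).toList).Perm (j :: S.toList) := Finset.toList_insert h
  have h3 : (j :: S.toList).Perm (j :: S.sort (· ≤ ·)) :=
    List.Perm.cons j (Finset.sort_perm_toList _ _).symm
  have h4 : ((S.sort (· ≤ ·)).orderedInsert (· ≤ ·) j).Perm (j :: S.sort (· ≤ ·)) :=
    List.perm_orderedInsert _ _ _
  exact List.Perm.eq_of_pairwise' (Finset.pairwise_sort _ _)
    (List.Pairwise.orderedInsert _ _ (Finset.pairwise_sort _ _)) ((h1.trans h2).trans (h3.trans h4.symm))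

lemma countP_sort_insert (S : Finset (Fin (2*m))) (j : Fin (2*m)) :
    ((insert j S).sort (· ≤ ·)).countP (· < j) = (S.sort (· ≤ ·)).countP (· < j) := by
  by_cases h : j ∈ S
  · rw [Finset.insert_eq_self.mpr h]
  · have h1 : ((insert j S).sort (· ≤ ·)).Perm (insert j S).toList :=
      Finset.sort_perm_toList _ _
    have h2 : ((insert j S).toList).Perm (j :: S.toList) := Finset.toList_insert h
    have h3 : (j :: S.toList).Perm (j :: S.sort (· ≤ ·)) :=
      List.Perm.cons j (Finset.sort_perm_toList S (· ≤ ·)).symm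
    rw [((h1.trans h2).trans h3).countP_eq]
    simp [List.countP_cons]

lemma ordIns (F : MajoranaFamily m) (j : Fin (2*m)) :
    ∀ (l : List (Fin (2*m))), l.Pairwise (· ≤ ·) → j ∉ l →
    F.c j * P F l = ((-1:ℂ) ^ (l.countP (· < j))) • P F (l.orderedInsert (· ≤ ·) j)
  | [], _, _ => by simp [List.orderedInsert]
  | a :: t, hs, hj => by
    have ht := List.pairwise_cons.mp hs
    by_cases hja : j ≤ a
    · have h0 : (a :: t).countP (· < j) = 0 := by
        apply List.countP_eq_zero.mpr
        intro x hx
        rcases List.mem_cons.mp hx with rfl | hx'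
        · simp [not_lt.mpr hja]
        · simp [not_lt.mpr (hja.trans (ht.1 x hx'))]
      simp only [List.orderedInsert, if_pos hja, h0, pow_zero, one_smul, P_cons]
    · push_neg at hja
      have hj' : j ∉ t := fun hmem => hj (List.mem_cons_of_mem a hmem)
      have hne : j ≠ a := fun e => hj (e ▸ (List.mem_cons_self : a ∈ a :: t))
      have hcnt : (a :: t).countP (· < j) = t.countP (· < j) + 1 := by
        simp [List.countP_cons, hja]
      simp only [List.orderedInsert, if_neg (not_le.mpr hja), hcnt, P_cons]
      rw [← mul_assoc, F.anticomm j a hne, neg_mul, mul_assoc,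
        ordIns F j t ht.2 hj', mul_smul_comm, pow_succ, mul_neg_one, neg_smul]

def eps (j : Fin (2*m)) (S : Finset (Fin (2*m))) : ℂ :=
  (-1) ^ ((S.sort (· ≤ ·)).countP (· < j))

lemma eps_sq (j : Fin (2*m)) (S : Finset (Fin (2*m))) : eps j S * eps j S = 1 := by
  rw [eps, ← pow_add, ← two_mul, pow_mul]
  simp

lemma eps_insert (j : Fin (2*m)) (S : Finset (Fin (2*m))) : eps j (insert j S) = eps j S := by
  rw [eps, eps, countP_sort_insert]

lemma key_insert (F : MajoranaFamily m) {j : Fin (2*m)} {S : Finset (Fin (2*m))}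
    (h : j ∉ S) : F.c j * majProd F S = eps j S • majProd F (insert j S) := by
  have : majProd F (insert j S) = P F ((S.sort (· ≤ ·)).orderedInsert (· ≤ ·) j) := by
    rw [majProd, sort_insert h]; rfl
  rw [this, majProd]
  exact ordIns F j _ (Finset.pairwise_sort _ _) (fun hc => h ((Finset.mem_sort _).mp hc))

def flip (j : Fin (2*m)) (S : Finset (Fin (2*m))) : Finset (Fin (2*m)) :=
  if j ∈ S then S.erase j else insert j S

lemma flip_flip (j : Fin (2*m)) (S : Finset (Fin (2*m))) : flip j (flip j S) = S := by
  by_cases h : j ∈ S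
  · simp [flip, h, Finset.notMem_erase, Finset.insert_erase h]
  · simp [flip, h, Finset.erase_insert h]

lemma eps_flip (j : Fin (2*m)) (S : Finset (Fin (2*m))) : eps j (flip j S) = eps j S := by
  by_cases h : j ∈ S
  · rw [flip, if_pos h]
    conv_rhs => rw [← Finset.insert_erase h, eps_insert]
  · rw [flip, if_neg h, eps_insert]

lemma key (F : MajoranaFamily m) (j : Fin (2*m)) (S : Finset (Fin (2*m))) :
    F.c j * majProd F S = eps j S • majProd F (flip j S) := by
  by_cases h : j ∈ S
  · rw [flip, if_pos h]
    have h0 : j ∉ S.erase j := Finset.notMem_erase j S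
    have h1 := key_insert F h0
    rw [Finset.insert_erase h] at h1
    have h2 : eps j (S.erase j) = eps j S := by
      conv_rhs => rw [← Finset.insert_erase h, eps_insert]
    rw [h2] at h1
    calc F.c j * majProd F S = F.c j * ((eps j S * eps j S) • majProd F S) := by
            rw [eps_sq, one_smul]
      _ = eps j S • (F.c j * (eps j S • majProd F S)) := by
            simp [mul_smul_comm, smul_smul, mul_comm]
      _ = eps j S • (F.c j * (F.c j * majProd F (S.erase j))) := by rw [← h1]
      _ = eps j S • majProd F (S.erase j) := by rw [← mul_assoc, F.sq, one_mul]
  · rw [flip, if_neg h]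
    exact key_insert F h

lemma key2 (F : MajoranaFamily m) (j : Fin (2*m)) (S : Finset (Fin (2*m))) :
    F.c j * majProd F (flip j S) = eps j S • majProd F S := by
  rw [key F j (flip j S), eps_flip, flip_flip]

lemma majProd_empty (F : MajoranaFamily m) : majProd F ∅ = 1 := by
  rw [majProd, Finset.sort_empty]; rfl

lemma sort_insert_perm {S : Finset (Fin (2*m))} {j : Fin (2*m)} (h : j ∉ S) :
    ((insert j S).sort (· ≤ ·)).Perm (j :: S.sort (· ≤ ·)) := by
  have h1 : ((insert j S).sort (· ≤ ·)).Perm (insert j S).toList :=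
    Finset.sort_perm_toList _ _
  have h2 : ((insert j S).toList).Perm (j :: S.toList) := Finset.toList_insert h
  have h3 : (j :: S.toList).Perm (j :: S.sort (· ≤ ·)) :=
    List.Perm.cons j (Finset.sort_perm_toList _ _).symm
  exact (h1.trans h2).trans h3

lemma countP_ne_not_mem {S : Finset (Fin (2*m))} {j : Fin (2*m)} (h : j ∉ S) :
    (S.sort (· ≤ ·)).countP (· ≠ j) = S.card := by
  have hal : ∀ x ∈ S.sort (· ≤ ·), (fun x => decide (x ≠ j)) x = true := by
    intro x hx
    have : x ∈ S := (Finset.mem_sort _).mp hx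
    simp [ne_of_mem_of_not_mem this h]
  rw [List.countP_eq_length.mpr hal, Finset.length_sort]

lemma countP_ne_mem {S : Finset (Fin (2*m))} {j : Fin (2*m)} (h : j ∈ S) :
    (S.sort (· ≤ ·)).countP (· ≠ j) = S.card - 1 := by
  have h0 : j ∉ S.erase j := Finset.notMem_erase j S
  have hp : ((insert j (S.erase j)).sort (· ≤ ·)).Perm (j :: (S.erase j).sort (· ≤ ·)) :=
    sort_insert_perm h0
  rw [Finset.insert_erase h] at hp
  rw [hp.countP_eq, List.countP_cons, countP_ne_not_mem h0, Finset.card_erase_of_mem h]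
  simp

lemma flip_eq (j : Fin (2*m)) (S : Finset (Fin (2*m))) : flip j S = symmDiff {j} S := by
  ext x
  by_cases h : j ∈ S <;>
    by_cases hx : x = j <;>
      simp [flip, h, hx, Finset.mem_symmDiff]

lemma trace_majProd (F : MajoranaFamily m) {S : Finset (Fin (2*m))} (h : S ≠ ∅) :
    (majProd F S).trace = 0 := by
  -- find j with odd countP (· ≠ j)
  obtain ⟨j, hodd⟩ : ∃ j, Odd ((S.sort (· ≤ ·)).countP (· ≠ j)) := by
    rcases Nat.even_or_odd S.card with he | ho
    · obtain ⟨j, hj⟩ := Finset.nonempty_iff_ne_empty.mpr h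
      refine ⟨j, ?_⟩
      rw [countP_ne_mem hj]
      have h1 : 1 ≤ S.card := Finset.card_pos.mpr ⟨j, hj⟩
      exact (Nat.Even.sub_odd h1 he odd_one)
    · have hne : S ≠ Finset.univ := by
        intro e
        rw [e, Finset.card_univ, Fintype.card_fin] at ho
        exact (Nat.not_odd_iff_even.mpr (even_two_mul m)) ho
      obtain ⟨j, hj⟩ : ∃ j, j ∉ S := by
        by_contra hc
        push_neg at hc
        exact hne (Finset.eq_univ_iff_forall.mpr hc)
      exact ⟨j, by rw [countP_ne_not_mem hj]; exact ho⟩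
  have hconj := conj_P F (S.sort (· ≤ ·)) j
  have hP : P F (S.sort (· ≤ ·)) = majProd F S := rfl
  rw [hP, hodd.neg_one_pow, neg_one_smul] at hconj
  have h1 : (F.c j * (majProd F S * F.c j)).trace = (majProd F S).trace := by
    rw [← mul_assoc, Matrix.trace_mul_comm, ← mul_assoc, F.sq, one_mul]
  rw [hconj, Matrix.trace_neg] at h1
  have := h1.symm
  rw [eq_comm, neg_eq_iff_add_eq_zero] at this
  have h2 : (2:ℂ) * (majProd F S).trace = 0 := by ring_nf; linear_combination this
  simpa using h2

lemma prod_prod (F : MajoranaFamily m) (T S : Finset (Fin (2*m))) :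
    ∃ ε : ℂ, ε * ε = 1 ∧ majProd F T * majProd F S = ε • majProd F (symmDiff T S) := by
  induction T using Finset.induction_on with
  | empty =>
    refine ⟨1, by norm_num, ?_⟩
    rw [majProd_empty, one_mul, one_smul]
    congr 1
    rw [← Finset.bot_eq_empty, bot_symmDiff]
  | @insert j T h ih =>
    obtain ⟨ε, hε1, hε2⟩ := ih
    refine ⟨eps j T * ε * eps j (symmDiff T S), ?_, ?_⟩
    · have : eps j T * ε * eps j (symmDiff T S) * (eps j T * ε * eps j (symmDiff T S))
          = (eps j T * eps j T) * ((ε * ε) * (eps j (symmDiff T S) * eps j (symmDiff T S))) := by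
        ring
      rw [this, eps_sq, hε1, eps_sq]; norm_num
    · have hins : majProd F (insert j T) = eps j T • (F.c j * majProd F T) := by
        rw [key_insert F h, smul_smul, eps_sq, one_smul]
      have hset : flip j (symmDiff T S) = symmDiff (insert j T) S := by
        calc flip j (symmDiff T S) = symmDiff {j} (symmDiff T S) := flip_eq _ _
          _ = symmDiff (symmDiff {j} T) S := (symmDiff_assoc _ _ _).symm
          _ = symmDiff (insert j T) S := by rw [← flip_eq, flip, if_neg h]
      rw [hins, smul_mul_assoc, mul_assoc, hε2, mul_smul_comm, key, hset,
        smul_smul, smul_smul, mul_assoc]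

lemma trace_one' : (1 : Mat m).trace = (2:ℂ)^m := by
  rw [Matrix.trace_one]
  simp [Fintype.card_fin]

lemma li (F : MajoranaFamily m) :
    LinearIndependent ℂ (fun S : Finset (Fin (2*m)) => majProd F S) := by
  rw [Fintype.linearIndependent_iff]
  intro g hg T
  choose e he1 he2 using fun S => prod_prod F T S
  have h0 : majProd F T * (∑ S, g S • majProd F S) = 0 := by
    rw [hg, mul_zero]
  rw [Finset.mul_sum] at h0
  have h1 : ∑ S : Finset (Fin (2*m)), (g S * e S) • majProd F (symmDiff T S) = 0 := by
    rw [← h0]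
    refine Finset.sum_congr rfl fun S _ => ?_
    rw [mul_smul_comm, he2, smul_smul, mul_comm (g S) (e S), mul_comm (e S) (g S)]
  have h2 := congrArg Matrix.trace h1
  rw [Matrix.trace_sum, Matrix.trace_zero] at h2
  rw [Finset.sum_eq_single T (fun S _ hST => ?_) (fun hT => absurd (Finset.mem_univ T) hT)]
    at h2
  · rw [Matrix.trace_smul, symmDiff_self] at h2
    have : majProd F (⊥ : Finset (Fin (2*m))) = 1 := majProd_empty F
    rw [this, trace_one'] at h2
    have he : e T ≠ 0 := by
      intro hz
      have h1T := he1 T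
      rw [hz, mul_zero] at h1T
      exact one_ne_zero h1T.symm
    have h2m : (2:ℂ)^m ≠ 0 := pow_ne_zero m two_ne_zero
    rw [smul_eq_mul] at h2
    have := mul_eq_zero.mp h2
    rcases this with hh | hh
    · rcases mul_eq_zero.mp hh with hh2 | hh2
      · exact hh2
      · exact absurd hh2 he
    · exact absurd hh h2m
  · rw [Matrix.trace_smul, trace_majProd F, smul_zero]
    intro hbot
    exact hST (symmDiff_eq_bot.mp hbot).symm

lemma card_eq_finrank : Fintype.card (Finset (Fin (2*m))) = Module.finrank ℂ (Mat m) := by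
  rw [Fintype.card_finset, Fintype.card_fin]
  rw [Module.finrank_matrix]
  simp [Fintype.card_fin, two_mul, pow_add]

def bC (F : MajoranaFamily m) : Module.Basis (Finset (Fin (2*m))) ℂ (Mat m) :=
  basisOfLinearIndependentOfCardEqFinrank (li F) card_eq_finrank

lemma bC_eq (F : MajoranaFamily m) (S : Finset (Fin (2*m))) : bC F S = majProd F S := by
  rw [bC, coe_basisOfLinearIndependentOfCardEqFinrank]

lemma span_top (F : MajoranaFamily m) :
    Submodule.span ℂ (Set.range fun S : Finset (Fin (2*m)) => majProd F S) = ⊤ := by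
  have := (bC F).span_eq
  rw [← this]
  congr 1
  ext X
  simp only [Set.mem_range]
  constructor
  · rintro ⟨S, rfl⟩; exact ⟨S, (bC_eq F S)⟩
  · rintro ⟨S, rfl⟩; exact ⟨S, (bC_eq F S).symm⟩

def A0aux (F : MajoranaFamily m) (B : Mat m) : Mat m :=
  ∑ S : Finset (Fin (2*m)), majProd F S * B * (majProd F S)ᵀ

lemma stdBasis_sandwich (A B : Mat m) (a b x y : Fin (2^m)) :
    (A * Matrix.single a b (1:ℂ) * B) x y = A x a * B b y := by
  rw [Matrix.mul_apply]
  rw [Finset.sum_eq_single b]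
  · rw [Matrix.mul_single_apply_same, mul_one]
  · intro q _ hq
    rw [Matrix.mul_single_apply_of_ne (1:ℂ) a b x q hq, zero_mul]
  · intro h; exact absurd (Finset.mem_univ b) h

lemma A0aux_entry (F : MajoranaFamily m) (a b x y : Fin (2^m)) :
    A0aux F (Matrix.single a b (1:ℂ)) x y
      = ∑ S : Finset (Fin (2*m)), (majProd F S) x a * (majProd F S) y b := by
  rw [A0aux, Matrix.sum_apply]
  refine Finset.sum_congr rfl fun S _ => ?_
  rw [stdBasis_sandwich, Matrix.transpose_apply]

lemma exists_B (F : MajoranaFamily m) : ∃ B : Mat m, A0aux F B ≠ 0 := by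
  by_contra hc
  push_neg at hc
  have hA : ∀ a x : Fin (2^m), ∀ S, (majProd F S) x a = 0 := by
    intro a x
    have hg : ∑ S : Finset (Fin (2*m)), ((majProd F S) x a) • majProd F S = 0 := by
      ext y b
      rw [Matrix.sum_apply]
      simp only [Matrix.smul_apply, smul_eq_mul]
      rw [← A0aux_entry F a b x y, hc (Matrix.single a b (1:ℂ))]
      rfl
    exact Fintype.linearIndependent_iff.mp (li F) _ hg
  have a0 : Fin (2^m) := ⟨0, Nat.pow_pos (by norm_num)⟩
  have h1 := hA a0 a0 ∅
  rw [majProd_empty] at h1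
  rw [Matrix.one_apply_eq] at h1
  exact one_ne_zero h1

def A0 (F : MajoranaFamily m) : Mat m := A0aux F (Classical.choose (exists_B F))

lemma A0_ne (F : MajoranaFamily m) : A0 F ≠ 0 := Classical.choose_spec (exists_B F)

def flipEquiv (j : Fin (2*m)) : Equiv.Perm (Finset (Fin (2*m))) :=
  Function.Involutive.toPerm (flip j) (flip_flip j)

lemma A0_intertwine (F : MajoranaFamily m) (j : Fin (2*m)) :
    F.c j * A0 F = A0 F * (F.c j)ᵀ := by
  set B := Classical.choose (exists_B F)
  have hL : F.c j * A0 F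
      = ∑ S : Finset (Fin (2*m)), eps j S • (majProd F (flip j S) * B * (majProd F S)ᵀ) := by
    rw [A0, A0aux, Finset.mul_sum]
    refine Finset.sum_congr rfl fun S _ => ?_
    rw [← mul_assoc, ← mul_assoc, key F j S, smul_mul_assoc, smul_mul_assoc]
  have hR : A0 F * (F.c j)ᵀ
      = ∑ S : Finset (Fin (2*m)), eps j S • (majProd F S * B * (majProd F (flip j S))ᵀ) := by
    rw [A0, A0aux, Finset.sum_mul]
    refine Finset.sum_congr rfl fun S _ => ?_
    rw [mul_assoc, mul_assoc, ← Matrix.transpose_mul, key F j S, Matrix.transpose_smul,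
      mul_smul_comm, mul_smul_comm, mul_assoc]
  rw [hL, hR]
  rw [← Equiv.sum_comp (flipEquiv j) _]
  refine Finset.sum_congr rfl fun S _ => ?_
  have h1 : flipEquiv j S = flip j S := rfl
  rw [h1, eps_flip, flip_flip]

lemma A0_isUnit (F : MajoranaFamily m) : IsUnit (A0 F).det := by
  rw [isUnit_iff_ne_zero]
  intro hdet
  obtain ⟨x, hx0, hxk⟩ := (Matrix.exists_mulVec_eq_zero_iff).mpr hdet
  -- step: kernel invariant under (F.c j)ᵀ
  have hstep : ∀ (j : Fin (2*m)) (y : Fin (2^m) → ℂ), (A0 F).mulVec y = 0 →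
      (A0 F).mulVec ((F.c j)ᵀ.mulVec y) = 0 := by
    intro j y hy
    rw [Matrix.mulVec_mulVec, ← A0_intertwine, ← Matrix.mulVec_mulVec, hy,
      Matrix.mulVec_zero]
  have hlist : ∀ (l : List (Fin (2*m))) (y : Fin (2^m) → ℂ), (A0 F).mulVec y = 0 →
      (A0 F).mulVec ((P F l)ᵀ.mulVec y) = 0 := by
    intro l
    induction l with
    | nil => intro y hy; simpa [P] using hy
    | cons a t ih =>
      intro y hy
      rw [P_cons, Matrix.transpose_mul, ← Matrix.mulVec_mulVec]
      exact ih _ (hstep a y hy)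
  -- submodule of matrices X with A0 (Xᵀ x) = 0
  have hallX : ∀ X : Mat m, (A0 F).mulVec (Xᵀ.mulVec x) = 0 := by
    intro X
    let W : Submodule ℂ (Mat m) :=
      { carrier := {Y : Mat m | (A0 F).mulVec (Yᵀ.mulVec x) = 0}
        add_mem' := by
          intro Y Z hY hZ
          simp only [Set.mem_setOf_eq] at *
          rw [Matrix.transpose_add, Matrix.add_mulVec, Matrix.mulVec_add, hY, hZ, add_zero]
        zero_mem' := by
          simp only [Set.mem_setOf_eq, Matrix.transpose_zero, Matrix.zero_mulVec,
            Matrix.mulVec_zero]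
        smul_mem' := by
          intro c Y hY
          simp only [Set.mem_setOf_eq] at *
          rw [Matrix.transpose_smul, Matrix.smul_mulVec, Matrix.mulVec_smul, hY,
            smul_zero] }
    have hsub : Set.range (fun S : Finset (Fin (2*m)) => majProd F S) ⊆ W := by
      rintro _ ⟨S, rfl⟩
      exact hlist (S.sort (· ≤ ·)) x hxk
    have : (⊤ : Submodule ℂ (Mat m)) ≤ W := by
      rw [← span_top F]
      exact Submodule.span_le.mpr hsub
    exact this (Submodule.mem_top : X ∈ ⊤)
  -- hence A0 kills everything
  have hally : ∀ y : Fin (2^m) → ℂ, (A0 F).mulVec y = 0 := by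
    intro y
    obtain ⟨i0, hi0⟩ := Function.ne_iff.mp hx0
    have hi0' : x i0 ≠ 0 := by simpa using hi0
    let X : Mat m := (Matrix.of fun p q => if q = i0 then y p / x i0 else 0)ᵀ
    have hXx : Xᵀ.mulVec x = y := by
      funext p
      rw [Matrix.mulVec]
      show (∑ q, (Matrix.of fun p q => if q = i0 then y p / x i0 else 0) p q * x q) = y p
      rw [Finset.sum_eq_single i0]
      · rw [Matrix.of_apply, if_pos rfl]; field_simp
      · intro q _ hq; simp [Matrix.of_apply, hq]
      · intro h; exact absurd (Finset.mem_univ i0) h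
    have := hallX X
    rwa [hXx] at this
  -- A0 = 0
  apply A0_ne F
  ext i j
  have := congrFun (hally (Pi.single j 1)) i
  rw [Matrix.mulVec_single] at this
  simpa using this

lemma inv_c (F : MajoranaFamily m) (j : Fin (2*m)) :
    (A0 F)⁻¹ * F.c j = (F.c j)ᵀ * (A0 F)⁻¹ := by
  have h := A0_intertwine F j
  calc (A0 F)⁻¹ * F.c j
      = (A0 F)⁻¹ * F.c j * (A0 F * (A0 F)⁻¹) := by
        rw [Matrix.mul_nonsing_inv _ (A0_isUnit F), mul_one]
    _ = (A0 F)⁻¹ * (F.c j * A0 F) * (A0 F)⁻¹ := by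
        rw [← mul_assoc, ← mul_assoc, mul_assoc ((A0 F)⁻¹)]
    _ = (A0 F)⁻¹ * (A0 F * (F.c j)ᵀ) * (A0 F)⁻¹ := by rw [h]
    _ = (F.c j)ᵀ * (A0 F)⁻¹ := by
        rw [← mul_assoc, Matrix.nonsing_inv_mul _ (A0_isUnit F), one_mul]

lemma A0T_intertwine (F : MajoranaFamily m) (j : Fin (2*m)) :
    (A0 F)ᵀ * (F.c j)ᵀ = F.c j * (A0 F)ᵀ := by
  have h := congrArg Matrix.transpose (A0_intertwine F j)
  rw [Matrix.transpose_mul, Matrix.transpose_mul, Matrix.transpose_transpose] at h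
  exact h

def Z0 (F : MajoranaFamily m) : Mat m := (A0 F)ᵀ * (A0 F)⁻¹

lemma Z0_comm_c (F : MajoranaFamily m) (j : Fin (2*m)) : Z0 F * F.c j = F.c j * Z0 F := by
  rw [Z0, mul_assoc, inv_c, ← mul_assoc, A0T_intertwine, mul_assoc]

lemma Z0_comm_P (F : MajoranaFamily m) (l : List (Fin (2*m))) :
    Z0 F * P F l = P F l * Z0 F := by
  induction l with
  | nil => simp
  | cons a t ih =>
    rw [P_cons, ← mul_assoc, Z0_comm_c, mul_assoc, ih, mul_assoc]

lemma Z0_comm_all (F : MajoranaFamily m) (X : Mat m) : Z0 F * X = X * Z0 F := by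
  let W : Submodule ℂ (Mat m) :=
    { carrier := {Y : Mat m | Z0 F * Y = Y * Z0 F}
      add_mem' := by
        intro Y1 Y2 h1 h2
        simp only [Set.mem_setOf_eq] at *
        rw [mul_add, add_mul, h1, h2]
      zero_mem' := by simp
      smul_mem' := by
        intro c Y hY
        simp only [Set.mem_setOf_eq] at *
        rw [mul_smul_comm, smul_mul_assoc, hY] }
  have hsub : Set.range (fun S : Finset (Fin (2*m)) => majProd F S) ⊆ W := by
    rintro _ ⟨S, rfl⟩
    exact Z0_comm_P F (S.sort (· ≤ ·))
  have htop : (⊤ : Submodule ℂ (Mat m)) ≤ W := by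
    rw [← span_top F]
    exact Submodule.span_le.mpr hsub
  exact htop (Submodule.mem_top : X ∈ ⊤)

lemma Z0_scalar (F : MajoranaFamily m) : ∃ z : ℂ, Z0 F = z • 1 := by
  have h : Pairwise fun i j : Fin (2^m) => Commute (Matrix.single i j 1) (Z0 F) := by
    intro i j _
    exact (Z0_comm_all F (Matrix.single i j 1)).symm
  obtain ⟨z, hz⟩ := Matrix.mem_range_scalar_of_commute_single h
  refine ⟨z, ?_⟩
  rw [← hz, Matrix.scalar_apply, Matrix.smul_one_eq_diagonal]

def zval (F : MajoranaFamily m) : ℂ := Classical.choose (Z0_scalar F)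

lemma A0_transpose (F : MajoranaFamily m) : (A0 F)ᵀ = zval F • A0 F := by
  have hz : Z0 F = zval F • 1 := Classical.choose_spec (Z0_scalar F)
  have : (A0 F)ᵀ = Z0 F * A0 F := by
    rw [Z0, mul_assoc, Matrix.nonsing_inv_mul _ (A0_isUnit F), mul_one]
  rw [this, hz, smul_mul_assoc, one_mul]

lemma zval_sq (F : MajoranaFamily m) : zval F * zval F = 1 := by
  have h := congrArg Matrix.transpose (A0_transpose F)
  rw [Matrix.transpose_transpose, Matrix.transpose_smul, A0_transpose, smul_smul] at h
  by_contra hne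
  have : (zval F * zval F - 1) • A0 F = 0 := by
    rw [sub_smul, one_smul, ← h, sub_self]
  rcases smul_eq_zero.mp this with h1 | h1
  · exact hne (by linear_combination h1)
  · exact A0_ne F h1

lemma P_transpose (F : MajoranaFamily m) (l : List (Fin (2*m))) :
    (P F l)ᵀ = (A0 F)⁻¹ * P F l.reverse * A0 F := by
  induction l with
  | nil =>
    simp only [List.reverse_nil, P_nil, Matrix.transpose_one, mul_one]
    rw [Matrix.nonsing_inv_mul _ (A0_isUnit F)]
  | cons a t ih =>
    have hc : (F.c a)ᵀ = (A0 F)⁻¹ * (F.c a * A0 F) := by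
      rw [mul_assoc] at *
      have := inv_c F a
      calc (F.c a)ᵀ = (F.c a)ᵀ * ((A0 F)⁻¹ * A0 F) := by
            rw [Matrix.nonsing_inv_mul _ (A0_isUnit F), mul_one]
        _ = ((F.c a)ᵀ * (A0 F)⁻¹) * A0 F := by rw [mul_assoc]
        _ = ((A0 F)⁻¹ * F.c a) * A0 F := by rw [← this]
        _ = (A0 F)⁻¹ * (F.c a * A0 F) := by rw [mul_assoc]
    rw [List.reverse_cons, P_cons, Matrix.transpose_mul, ih, hc, P_append]
    have hPs : P F [a] = F.c a := by simp [P]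
    rw [hPs]
    have hcan : A0 F * ((A0 F)⁻¹ * (F.c a * A0 F)) = F.c a * A0 F := by
      rw [← mul_assoc, Matrix.mul_nonsing_inv _ (A0_isUnit F), one_mul]
    rw [mul_assoc, mul_assoc, hcan]
    simp [mul_assoc]

lemma majProd_transpose (F : MajoranaFamily m) (S : Finset (Fin (2*m))) :
    (majProd F S)ᵀ = ((-1:ℂ) ^ (S.card.choose 2)) • ((A0 F)⁻¹ * majProd F S * A0 F) := by
  have h := P_transpose F (S.sort (· ≤ ·))
  rw [reverse_P F _ (Finset.sort_nodup _ _), Finset.length_sort] at h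
  show (P F (S.sort (· ≤ ·)))ᵀ
      = ((-1:ℂ) ^ (S.card.choose 2)) • ((A0 F)⁻¹ * P F (S.sort (· ≤ ·)) * A0 F)
  rw [h, mul_smul_comm, smul_mul_assoc]

lemma liA (F : MajoranaFamily m) :
    LinearIndependent ℂ (fun S : Finset (Fin (2*m)) => majProd F S * A0 F) := by
  rw [Fintype.linearIndependent_iff]
  intro g hg S
  apply Fintype.linearIndependent_iff.mp (li F) g ?_ S
  have h : (∑ i : Finset (Fin (2*m)), g i • majProd F i) * A0 F = 0 := by
    rw [Finset.sum_mul, ← hg]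
    exact Finset.sum_congr rfl fun T _ => (smul_mul_assoc _ _ _)
  have h2 := congrArg (fun X => X * (A0 F)⁻¹) h
  simpa [mul_assoc, Matrix.mul_nonsing_inv _ (A0_isUnit F)] using h2

def bA (F : MajoranaFamily m) : Module.Basis (Finset (Fin (2*m))) ℂ (Mat m) :=
  basisOfLinearIndependentOfCardEqFinrank (liA F) card_eq_finrank

lemma bA_eq (F : MajoranaFamily m) (S : Finset (Fin (2*m))) :
    bA F S = majProd F S * A0 F := by
  rw [bA, coe_basisOfLinearIndependentOfCardEqFinrank]

lemma bA_transpose (F : MajoranaFamily m) (S : Finset (Fin (2*m))) :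
    (majProd F S * A0 F)ᵀ
      = (zval F * (-1:ℂ)^(S.card.choose 2)) • (majProd F S * A0 F) := by
  rw [Matrix.transpose_mul, A0_transpose, majProd_transpose]
  rw [smul_mul_assoc, mul_smul_comm, smul_smul]
  congr 1
  rw [← mul_assoc, ← mul_assoc, Matrix.mul_nonsing_inv _ (A0_isUnit F), one_mul]

def Tmap (m : ℕ) : Mat m →ₗ[ℂ] Mat m where
  toFun := Matrix.transpose
  map_add' := Matrix.transpose_add
  map_smul' := by intro c X; simp

lemma stdBasisMatrix_transpose (i j : Fin (2^m)) (c : ℂ) :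
    (Matrix.single i j c)ᵀ = Matrix.single j i c := by
  ext a b
  rw [Matrix.transpose_apply]
  by_cases h1 : a = j <;> by_cases h2 : b = i <;>
    simp [Matrix.single, h1, h2, and_comm]

lemma trace_Tmap_std : LinearMap.trace ℂ (Mat m) (Tmap m) = (2:ℂ)^m := by
  rw [LinearMap.trace_eq_matrix_trace ℂ (Matrix.stdBasis ℂ (Fin (2^m)) (Fin (2^m))) (Tmap m),
    Matrix.trace]
  have hdiag : ∀ p : Fin (2^m) × Fin (2^m),
      (LinearMap.toMatrix (Matrix.stdBasis ℂ (Fin (2^m)) (Fin (2^m)))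
        (Matrix.stdBasis ℂ (Fin (2^m)) (Fin (2^m))) (Tmap m)).diag p
      = if p.1 = p.2 then 1 else 0 := by
    rintro ⟨i, j⟩
    rw [Matrix.diag_apply, LinearMap.toMatrix_apply]
    have h1 : (Tmap m) (Matrix.stdBasis ℂ (Fin (2^m)) (Fin (2^m)) (i, j))
        = Matrix.stdBasis ℂ (Fin (2^m)) (Fin (2^m)) (j, i) := by
      rw [Matrix.stdBasis_eq_single, Matrix.stdBasis_eq_single]
      exact stdBasisMatrix_transpose i j 1
    rw [h1, Module.Basis.repr_self, Finsupp.single_apply]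
    by_cases h : i = j
    · subst h; simp
    · rw [if_neg (by simp [Prod.ext_iff]; tauto), if_neg h]
  rw [Finset.sum_congr rfl fun p _ => hdiag p]
  rw [Fintype.sum_prod_type]
  simp [Finset.sum_ite_eq]

lemma trace_Tmap_bA (F : MajoranaFamily m) :
    LinearMap.trace ℂ (Mat m) (Tmap m)
      = ∑ S : Finset (Fin (2*m)), zval F * (-1:ℂ)^(S.card.choose 2) := by
  rw [LinearMap.trace_eq_matrix_trace ℂ (bA F) (Tmap m), Matrix.trace]
  refine Finset.sum_congr rfl fun S _ => ?_
  rw [Matrix.diag_apply, LinearMap.toMatrix_apply]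
  have h1 : (Tmap m) (bA F S) = (zval F * (-1:ℂ)^(S.card.choose 2)) • bA F S := by
    rw [bA_eq]
    exact bA_transpose F S
  rw [h1, _root_.map_smul, Module.Basis.repr_self]
  simp

lemma sign_pow (r : ℕ) : (1 - Complex.I) * Complex.I ^ r
    = ((-1:ℂ)^(r.choose 2)) * (1 + (-1:ℂ)^(r+1) * Complex.I) := by
  induction r with
  | zero => norm_num [sub_eq_add_neg]
  | succ n ih =>
    have hch : (n+1).choose 2 = n.choose 2 + n := by
      rw [Nat.choose_succ_succ, Nat.choose_one_right, Nat.add_comm]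
    rw [pow_succ, ← mul_assoc, ih, hch, pow_add]
    have hI : Complex.I * Complex.I = -1 := by
      rw [← sq, Complex.I_sq]
    rw [pow_succ (-1:ℂ) (n+1)]
    ring_nf
    rw [Complex.I_sq, mul_comm n 2, pow_mul, neg_one_sq, one_pow]
    ring

lemma sign_pow' (r : ℕ) : (1 + Complex.I) * (-Complex.I) ^ r
    = ((-1:ℂ)^(r.choose 2)) * (1 - (-1:ℂ)^(r+1) * Complex.I) := by
  have h := congrArg (starRingEnd ℂ) (sign_pow r)
  simpa [Complex.conj_I, sub_eq_add_neg] using h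

lemma binom_sum (x : ℂ) : ∑ S : Finset (Fin (2*m)), x ^ S.card = (1+x)^(2*m) := by
  have h := Finset.prod_add (fun _ : Fin (2*m) => x) (fun _ => (1:ℂ)) Finset.univ
  simp only [Finset.prod_const, Finset.prod_const_one, one_pow, mul_one] at h
  rw [Finset.powerset_univ] at h
  have hcard : (Finset.univ : Finset (Fin (2*m))).card = 2*m := by
    rw [Finset.card_univ, Fintype.card_fin]
  rw [hcard] at h
  rw [add_comm 1 x, ← h]

lemma signsum : ∑ S : Finset (Fin (2*m)), ((-1:ℂ))^(S.card.choose 2)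
    = (2:ℂ)^m * (-1:ℂ)^(m.choose 2) := by
  have key : ∀ r : ℕ, ((-1:ℂ))^(r.choose 2)
      = ((1 - Complex.I) * Complex.I ^ r + (1 + Complex.I) * (-Complex.I) ^ r) / 2 := by
    intro r
    rw [sign_pow, sign_pow']
    ring
  calc ∑ S : Finset (Fin (2*m)), ((-1:ℂ))^(S.card.choose 2)
      = ∑ S : Finset (Fin (2*m)),
          ((1 - Complex.I) * Complex.I ^ S.card + (1 + Complex.I) * (-Complex.I) ^ S.card) / 2 :=
        Finset.sum_congr rfl fun S _ => key S.card
    _ = ((1 - Complex.I) * ∑ S : Finset (Fin (2*m)), Complex.I ^ S.card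
          + (1 + Complex.I) * ∑ S : Finset (Fin (2*m)), (-Complex.I) ^ S.card) / 2 := by
        rw [Finset.mul_sum, Finset.mul_sum, ← Finset.sum_add_distrib, ← Finset.sum_div]
    _ = ((1 - Complex.I) * (1 + Complex.I)^(2*m)
          + (1 + Complex.I) * (1 - Complex.I)^(2*m)) / 2 := by
        rw [binom_sum, binom_sum]
        ring_nf
    _ = ((1 - Complex.I) * ((2:ℂ)^m * Complex.I^m)
          + (1 + Complex.I) * ((2:ℂ)^m * (-Complex.I)^m)) / 2 := by
        have h1 : (1 + Complex.I)^(2*m) = (2:ℂ)^m * Complex.I^m := by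
          rw [mul_comm 2 m, pow_mul']
          have : (1 + Complex.I)^2 = 2 * Complex.I := by
            rw [add_sq, Complex.I_sq]; ring
          rw [this, mul_pow]
        have h2 : (1 - Complex.I)^(2*m) = (2:ℂ)^m * (-Complex.I)^m := by
          rw [mul_comm 2 m, pow_mul']
          have : (1 - Complex.I)^2 = 2 * (-Complex.I) := by
            rw [sub_sq, Complex.I_sq]; ring
          rw [this, mul_pow]
        rw [h1, h2]
    _ = (2:ℂ)^m * (((1 - Complex.I) * Complex.I^m + (1 + Complex.I) * (-Complex.I)^m) / 2) := by
        ring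
    _ = (2:ℂ)^m * (-1:ℂ)^(m.choose 2) := by rw [← key m]

lemma zval_eq (F : MajoranaFamily m) : zval F * (-1:ℂ)^(m.choose 2) = 1 := by
  have h1 := trace_Tmap_std (m := m)
  have h2 := trace_Tmap_bA F
  rw [h1] at h2
  rw [← Finset.mul_sum, signsum] at h2
  have h2m : (2:ℂ)^m ≠ 0 := pow_ne_zero m two_ne_zero
  apply mul_left_cancel₀ h2m
  rw [mul_one]
  linear_combination -h2

lemma conj_majProd (F : MajoranaFamily m) (j : Fin (2*m)) (S : Finset (Fin (2*m))) :
    F.c j * (majProd F S * A0 F) * (F.c j)ᵀ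
      = ((-1:ℂ)^((S.sort (· ≤ ·)).countP (· ≠ j))) • (majProd F S * A0 F) := by
  have h := conj_P F (S.sort (· ≤ ·)) j
  rw [← mul_assoc] at h
  have h' : F.c j * majProd F S * F.c j
      = ((-1:ℂ)^((S.sort (· ≤ ·)).countP (· ≠ j))) • majProd F S := h
  calc F.c j * (majProd F S * A0 F) * (F.c j)ᵀ
      = F.c j * majProd F S * (A0 F * (F.c j)ᵀ) := by simp only [mul_assoc]
    _ = F.c j * majProd F S * (F.c j * A0 F) := by rw [← A0_intertwine]
    _ = (F.c j * majProd F S * F.c j) * A0 F := by simp only [mul_assoc]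
    _ = (((-1:ℂ)^((S.sort (· ≤ ·)).countP (· ≠ j))) • majProd F S) * A0 F := by rw [h']
    _ = ((-1:ℂ)^((S.sort (· ≤ ·)).countP (· ≠ j))) • (majProd F S * A0 F) :=
        smul_mul_assoc _ _ _

lemma scalar_identity (r : ℕ) (hr : r ≤ 2*m) :
    (r:ℂ) * (-1:ℂ)^(r-1) + ((2*m - r : ℕ):ℂ) * (-1:ℂ)^r
      = (-1:ℂ)^r * ((2*m : ℂ) - 2*(r:ℂ)) := by
  rcases r with _ | k
  · push_cast
    simp
  · have hle : (k+1 : ℕ) ≤ 2*m := hr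
    rw [Nat.cast_sub hle]
    have : (k+1) - 1 = k := rfl
    rw [this, pow_succ]
    push_cast
    ring

lemma eigen (F : MajoranaFamily m) (S : Finset (Fin (2*m))) :
    ∑ j : Fin (2*m), F.c j * (majProd F S * A0 F) * (F.c j)ᵀ
      = ((-1:ℂ)^S.card * ((2*m : ℂ) - 2*(S.card : ℂ))) • (majProd F S * A0 F) := by
  rw [Finset.sum_congr rfl fun j _ => conj_majProd F j S]
  rw [← Finset.sum_add_sum_compl S]
  have h1 : ∑ j ∈ S, ((-1:ℂ)^((S.sort (· ≤ ·)).countP (· ≠ j))) • (majProd F S * A0 F)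
      = (S.card : ℂ) • ((-1:ℂ)^(S.card - 1) • (majProd F S * A0 F)) := by
    rw [Finset.sum_congr rfl (fun j hj => by rw [countP_ne_mem hj]), Finset.sum_const,
      Nat.cast_smul_eq_nsmul]
  have h2 : ∑ j ∈ Sᶜ, ((-1:ℂ)^((S.sort (· ≤ ·)).countP (· ≠ j))) • (majProd F S * A0 F)
      = ((2*m - S.card : ℕ) : ℂ) • ((-1:ℂ)^S.card • (majProd F S * A0 F)) := by
    rw [Finset.sum_congr rfl (fun j hj =>
        by rw [countP_ne_not_mem (Finset.mem_compl.mp hj)]), Finset.sum_const,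
      Nat.cast_smul_eq_nsmul, Finset.card_compl, Fintype.card_fin]
  rw [h1, h2, smul_smul, smul_smul, ← add_smul,
    scalar_identity S.card (by simpa [Fintype.card_fin] using Finset.card_le_univ S)]

end MF

open MF in
/-- The null space of `Λ` is contained in the symmetric subspace: `Λ v = 0` implies
`P v = v`, where `P` is the swap operator. -/
theorem stmt_8 (m : ℕ) (hm : 1 ≤ m) (F : MajoranaFamily m)
    (v : Fin (2^m) × Fin (2^m) → ℂ) (hv : (Lambda F).mulVec v = 0) :
    (fun p : Fin (2^m) × Fin (2^m) => v (p.2, p.1)) = v := by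
  classical
  set M : Mat m := Matrix.of (fun i k => v (i,k)) with hMdef
  have hM : ∑ j : Fin (2*m), F.c j * M * (F.c j)ᵀ = 0 := by
    ext i k
    have hv' := congrFun hv (i,k)
    have hL : (∑ j : Fin (2*m), F.c j * M * (F.c j)ᵀ) i k
        = ∑ j : Fin (2*m), ∑ q, ∑ p, F.c j i p * v (p,q) * F.c j k q := by
      rw [Matrix.sum_apply]
      refine Finset.sum_congr rfl fun j _ => ?_
      rw [Matrix.mul_apply]
      refine Finset.sum_congr rfl fun q _ => ?_
      rw [Matrix.mul_apply, Matrix.transpose_apply, Finset.sum_mul]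
      exact Finset.sum_congr rfl fun p _ => rfl
    have hR : (Lambda F).mulVec v (i,k)
        = ∑ p, ∑ q, (∑ j : Fin (2*m), F.c j i p * F.c j k q) * v (p,q) := by
      rw [Matrix.mulVec, dotProduct, Fintype.sum_prod_type]
      refine Finset.sum_congr rfl fun p _ => Finset.sum_congr rfl fun q _ => ?_
      congr 1
      rw [Lambda, Matrix.sum_apply]
      refine Finset.sum_congr rfl fun j _ => ?_
      exact Matrix.kroneckerMap_apply _ _ _ _ _
    have hswap : ∑ j : Fin (2*m), ∑ q, ∑ p, F.c j i p * v (p,q) * F.c j k q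
        = ∑ p, ∑ q, (∑ j : Fin (2*m), F.c j i p * F.c j k q) * v (p,q) := by
      calc ∑ j : Fin (2*m), ∑ q, ∑ p, F.c j i p * v (p,q) * F.c j k q
          = ∑ q, ∑ j : Fin (2*m), ∑ p, F.c j i p * v (p,q) * F.c j k q := Finset.sum_comm
        _ = ∑ q, ∑ p, ∑ j : Fin (2*m), F.c j i p * v (p,q) * F.c j k q :=
            Finset.sum_congr rfl fun q _ => Finset.sum_comm
        _ = ∑ p, ∑ q, ∑ j : Fin (2*m), F.c j i p * v (p,q) * F.c j k q := Finset.sum_comm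
        _ = ∑ p, ∑ q, (∑ j : Fin (2*m), F.c j i p * F.c j k q) * v (p,q) := by
            refine Finset.sum_congr rfl fun p _ => Finset.sum_congr rfl fun q _ => ?_
            rw [Finset.sum_mul]
            exact Finset.sum_congr rfl fun j _ => by ring
    show (∑ j : Fin (2*m), F.c j * M * (F.c j)ᵀ) i k = (0 : Mat m) i k
    rw [hL, hswap, ← hR, hv']
    rfl
  set a : Finset (Fin (2*m)) → ℂ := fun S => ((bA F).repr M) S with ha
  have hMexp : M = ∑ S : Finset (Fin (2*m)), a S • (majProd F S * A0 F) := by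
    conv_lhs => rw [← (bA F).sum_repr M]
    exact Finset.sum_congr rfl fun S _ => by rw [bA_eq]
  set μ : Finset (Fin (2*m)) → ℂ :=
    fun S => (-1:ℂ)^S.card * ((2*m : ℂ) - 2*(S.card : ℂ)) with hμdef
  have h0 : ∑ S : Finset (Fin (2*m)), (a S * μ S) • (majProd F S * A0 F) = 0 := by
    have e1 : ∀ j, F.c j * M * (F.c j)ᵀ
        = ∑ S : Finset (Fin (2*m)), a S • (F.c j * (majProd F S * A0 F) * (F.c j)ᵀ) := by
      intro j
      conv_lhs => rw [hMexp]
      rw [Finset.mul_sum, Finset.sum_mul]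
      refine Finset.sum_congr rfl fun S _ => ?_
      rw [mul_smul_comm, smul_mul_assoc]
    calc ∑ S : Finset (Fin (2*m)), (a S * μ S) • (majProd F S * A0 F)
        = ∑ S : Finset (Fin (2*m)),
            a S • (∑ j : Fin (2*m), F.c j * (majProd F S * A0 F) * (F.c j)ᵀ) := by
          refine Finset.sum_congr rfl fun S _ => ?_
          rw [eigen, smul_smul]
      _ = ∑ S : Finset (Fin (2*m)), ∑ j : Fin (2*m),
            a S • (F.c j * (majProd F S * A0 F) * (F.c j)ᵀ) :=
          Finset.sum_congr rfl fun S _ => Finset.smul_sum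
      _ = ∑ j : Fin (2*m), ∑ S : Finset (Fin (2*m)),
            a S • (F.c j * (majProd F S * A0 F) * (F.c j)ᵀ) := Finset.sum_comm
      _ = ∑ j : Fin (2*m), F.c j * M * (F.c j)ᵀ :=
          Finset.sum_congr rfl fun j _ => (e1 j).symm
      _ = 0 := hM
  have hcoef : ∀ S, a S * μ S = 0 :=
    fun S => Fintype.linearIndependent_iff.mp (liA F) _ h0 S
  have hsval : ∀ S : Finset (Fin (2*m)),
      a S * (zval F * (-1:ℂ)^(S.card.choose 2)) = a S := by
    intro S
    by_cases haS : a S = 0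
    · rw [haS, zero_mul]
    · have hμ0 : μ S = 0 := by
        rcases mul_eq_zero.mp (hcoef S) with h | h
        · exact absurd h haS
        · exact h
      have hne : ((-1:ℂ))^S.card ≠ 0 := pow_ne_zero _ (by norm_num)
      have h2 : (2*(m:ℂ)) - 2*(S.card:ℂ) = 0 := by
        rcases mul_eq_zero.mp hμ0 with h | h
        · exact absurd h hne
        · exact_mod_cast h
      have hmc : (m:ℂ) = (S.card:ℂ) := by linear_combination h2/2
      have hcard : S.card = m := by exact_mod_cast hmc.symm
      rw [hcard, zval_eq, mul_one]
  have hMT : Mᵀ = M := by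
    calc Mᵀ = ∑ S : Finset (Fin (2*m)), a S • (majProd F S * A0 F)ᵀ := by
          conv_lhs => rw [hMexp]
          rw [Matrix.transpose_sum]
          exact Finset.sum_congr rfl fun S _ => Matrix.transpose_smul _ _
      _ = ∑ S : Finset (Fin (2*m)),
            (a S * (zval F * (-1:ℂ)^(S.card.choose 2))) • (majProd F S * A0 F) := by
          refine Finset.sum_congr rfl fun S _ => ?_
          rw [bA_transpose, smul_smul]
      _ = ∑ S : Finset (Fin (2*m)), a S • (majProd F S * A0 F) :=
          Finset.sum_congr rfl fun S _ => by rw [hsval]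
      _ = M := hMexp.symm
  funext p
  have h1 : M p.2 p.1 = v (p.2, p.1) := rfl
  have h2 : M p.1 p.2 = v (p.1, p.2) := rfl
  have h3 := congrFun (congrFun hMT p.1) p.2
  rw [Matrix.transpose_apply] at h3
  show v (p.2, p.1) = v p
  rw [← h1, h3, h2]


end
end

section
/- Let ρ be an even state on ℂ^N with correlation matrix M. Then Mᵀ M ≤ I as real symmetric 2m×2m matrices; equivalently, all singular values of M lie in the interval [0, 1]. -/
open Matrix Kronecker Finset
open scoped ComplexOrder

noncomputable section

variable {m : ℕ}

/-- trace of PSD matrix is nonneg -/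
lemma psd_trace_nonneg {ι : Type*} [Fintype ι] [DecidableEq ι]
    {A : Matrix ι ι ℂ} (hA : A.PosSemidef) : 0 ≤ A.trace := by
  rw [Matrix.trace]
  apply Finset.sum_nonneg
  intro i _
  have h := hA.dotProduct_mulVec_nonneg (Pi.single i 1)
  simpa [dotProduct, Matrix.mulVec, Pi.single_apply, Matrix.diag] using h

def opOf (F : MajoranaFamily m) (u : Fin (2*m) → ℝ) : Mat m :=
  ∑ j, (u j : ℂ) • F.c j

lemma opOf_herm (F : MajoranaFamily m) (u : Fin (2*m) → ℝ) :
    (opOf F u)ᴴ = opOf F u := by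
  unfold opOf
  rw [Matrix.conjTranspose_sum]
  refine Finset.sum_congr rfl fun j _ => ?_
  rw [Matrix.conjTranspose_smul, (F.herm j).eq]
  simp

lemma opOf_mul (F : MajoranaFamily m) (u v : Fin (2*m) → ℝ) :
    opOf F u * opOf F v = ∑ j, ∑ k, ((u j : ℂ) * (v k : ℂ)) • (F.c j * F.c k) := by
  unfold opOf
  rw [Matrix.sum_mul]
  refine Finset.sum_congr rfl fun j _ => ?_
  rw [Matrix.mul_sum]
  refine Finset.sum_congr rfl fun k _ => ?_
  rw [Matrix.smul_mul, Matrix.mul_smul, smul_smul]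

lemma opOf_sq (F : MajoranaFamily m) (u : Fin (2*m) → ℝ) :
    opOf F u * opOf F u = ((∑ j, (u j)^2 : ℝ) : ℂ) • (1 : Mat m) := by
  rw [opOf_mul]
  have key : (2:ℂ) • (∑ j, ∑ k, ((u j : ℂ) * (u k : ℂ)) • (F.c j * F.c k))
      = (2:ℂ) • (((∑ j, (u j)^2 : ℝ) : ℂ) • (1 : Mat m)) := by
    have h1 : (2:ℂ) • (∑ j, ∑ k, ((u j : ℂ) * (u k : ℂ)) • (F.c j * F.c k))
        = ∑ j, ∑ k, (((u j : ℂ) * (u k : ℂ)) • (F.c j * F.c k)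
            + ((u k : ℂ) * (u j : ℂ)) • (F.c k * F.c j)) := by
      rw [two_smul]
      nth_rewrite 2 [Finset.sum_comm]
      rw [← Finset.sum_add_distrib]
      exact Finset.sum_congr rfl fun j _ => Finset.sum_add_distrib.symm
    rw [h1]
    have h2 : ∀ j : Fin (2*m), ∑ k, (((u j : ℂ) * (u k : ℂ)) • (F.c j * F.c k)
            + ((u k : ℂ) * (u j : ℂ)) • (F.c k * F.c j))
        = (2:ℂ) • (((u j)^2 : ℝ) : ℂ) • (1 : Mat m) := by
      intro j
      rw [Finset.sum_eq_single j]
      · rw [F.sq j]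
        push_cast
        rw [two_smul]
        ring_nf
      · intro k _ hk
        rw [F.anticomm j k (Ne.symm hk)]
        rw [mul_comm ((u j:ℂ)) ((u k:ℂ))]
        simp
      · simp
    rw [Finset.sum_congr rfl fun j _ => h2 j]
    rw [← Finset.smul_sum]
    congr 1
    rw [← Finset.sum_smul]
    push_cast
    rfl
  exact smul_right_injective (Mat m) (two_ne_zero) key

/-- For an even state `ρ` with correlation matrix `M`, one has `Mᵀ M ≤ I`. -/
theorem stmt_11 (m : ℕ) (hm : 1 ≤ m) (F : MajoranaFamily m) (ρ : Mat m)
    (hρ : IsState ρ) (hev : IsEven F ρ)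
    (M : Matrix (Fin (2*m)) (Fin (2*m)) ℝ)
    (hM : ∀ j k, (M j k : ℂ) =
      Complex.I / 2 * (ρ * (F.c j * F.c k - F.c k * F.c j)).trace) :
    ((1 : Matrix (Fin (2*m)) (Fin (2*m)) ℝ) - Mᵀ * M).PosSemidef := by
  have hanti : ∀ j k, M j k = -(M k j) := by
    intro j k
    have h1 := hM j k
    have h2 := hM k j
    have ht : (ρ * (F.c j * F.c k - F.c k * F.c j)).trace
        = -(ρ * (F.c k * F.c j - F.c j * F.c k)).trace := by
      rw [← Matrix.trace_neg, ← Matrix.mul_neg, neg_sub]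
    rw [ht] at h1
    have hc : (M j k : ℂ) = -(M k j : ℂ) := by rw [h1, h2]; ring
    exact_mod_cast hc
  have hMT : Mᵀ = -M := by
    ext j k
    simp only [Matrix.transpose_apply, Matrix.neg_apply]
    linarith [hanti k j]
  have htjk : ∀ j k, (ρ * (F.c j * F.c k - F.c k * F.c j)).trace
      = (-2) * Complex.I * (M j k : ℂ) := by
    intro j k
    have h := hM j k
    have hI : Complex.I * Complex.I = -1 := Complex.I_mul_I
    linear_combination (2 : ℂ) * Complex.I * h + (ρ * (F.c j * F.c k - F.c k * F.c j)).trace * hI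
  refine Matrix.posSemidef_iff_dotProduct_mulVec.mpr ⟨?_, ?_⟩
  · have h2 : (Mᵀ * M).IsHermitian := by
      have := Matrix.isHermitian_conjTranspose_mul_self M
      simpa [Matrix.conjTranspose_eq_transpose_of_trivial] using this
    exact Matrix.isHermitian_one.sub h2
  · intro x
    set y : Fin (2*m) → ℝ := M *ᵥ x with hy
    set a : Mat m := opOf F x with ha
    set b : Mat m := opOf F y with hb
    set C : Mat m := a + Complex.I • b with hCdef
    have hCH : Cᴴ = a - Complex.I • b := by
      rw [hCdef, Matrix.conjTranspose_add, Matrix.conjTranspose_smul, ha, hb,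
        opOf_herm, opOf_herm]
      simp [Complex.conj_I, sub_eq_add_neg, neg_smul]
    have hCC : Cᴴ * C = a*a + b*b + Complex.I • (a*b - b*a) := by
      rw [hCH, hCdef]
      simp only [Matrix.sub_mul, Matrix.mul_add, Matrix.add_mul, Matrix.smul_mul,
        Matrix.mul_smul, smul_smul, Complex.I_mul_I, neg_smul, one_smul, smul_sub]
      module
    have hab : a*b - b*a = ∑ j, ∑ k, ((x j : ℂ) * (y k : ℂ)) •
        (F.c j * F.c k - F.c k * F.c j) := by
      rw [ha, hb, opOf_mul, opOf_mul]
      nth_rewrite 2 [Finset.sum_comm]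
      rw [← Finset.sum_sub_distrib]
      refine Finset.sum_congr rfl fun j _ => ?_
      rw [← Finset.sum_sub_distrib]
      refine Finset.sum_congr rfl fun k _ => ?_
      rw [smul_sub, mul_comm ((y k : ℂ))]
    have htr1 : (ρ * (a*a)).trace = ((∑ j, (x j)^2 : ℝ) : ℂ) := by
      rw [ha, opOf_sq, Matrix.mul_smul, Matrix.mul_one, Matrix.trace_smul, hρ.2, smul_eq_mul, mul_one]
    have htr2 : (ρ * (b*b)).trace = ((∑ j, (y j)^2 : ℝ) : ℂ) := by
      rw [hb, opOf_sq, Matrix.mul_smul, Matrix.mul_one, Matrix.trace_smul, hρ.2, smul_eq_mul, mul_one]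
    have hdot : x ⬝ᵥ (M *ᵥ y) = -(y ⬝ᵥ y) := by
      have hvm : x ᵥ* M = -y := by
        have h := Matrix.vecMul_transpose (A := Mᵀ) (x := x)
        rw [Matrix.transpose_transpose] at h
        rw [h, hMT, Matrix.neg_mulVec, hy]
      rw [Matrix.dotProduct_mulVec, hvm, neg_dotProduct]
    have htr3 : (ρ * (a*b - b*a)).trace
        = (-2) * Complex.I * ((x ⬝ᵥ (M *ᵥ y) : ℝ) : ℂ) := by
      rw [hab]
      simp only [Matrix.mul_sum, Matrix.trace_sum, Matrix.mul_smul, Matrix.trace_smul,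
        smul_eq_mul, htjk]
      rw [dotProduct]
      push_cast [Matrix.mulVec, dotProduct]
      rw [Finset.mul_sum]
      refine Finset.sum_congr rfl fun j _ => ?_
      rw [Finset.mul_sum, Finset.mul_sum]
      refine Finset.sum_congr rfl fun k _ => ?_
      ring
    have hyy : y ⬝ᵥ y = ∑ j, (y j)^2 := by
      simp [dotProduct, sq]
    have htrC : (ρ * (Cᴴ * C)).trace
        = ((∑ j, (x j)^2 : ℝ) : ℂ) - ((∑ j, (y j)^2 : ℝ) : ℂ) := by
      rw [hCC, Matrix.mul_add, Matrix.mul_add, Matrix.trace_add, Matrix.trace_add,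
        htr1, htr2, Matrix.mul_smul, Matrix.trace_smul, htr3, hdot, hyy]
      push_cast
      rw [smul_eq_mul]
      ring_nf
      rw [Complex.I_sq]
      ring
    have hpos : 0 ≤ (ρ * (Cᴴ * C)).trace := by
      rw [Matrix.trace_mul_comm, Matrix.mul_assoc, Matrix.trace_mul_comm]
      exact psd_trace_nonneg (hρ.1.mul_mul_conjTranspose_same C)
    rw [htrC] at hpos
    have hreal : 0 ≤ (∑ j, (x j)^2) - (∑ j, (y j)^2) := by
      rw [← Complex.ofReal_sub] at hpos
      exact_mod_cast hpos
    have hexp : x ⬝ᵥ ((1 - Mᵀ * M) *ᵥ x) = (∑ j, (x j)^2) - (∑ j, (y j)^2) := by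
      rw [Matrix.sub_mulVec, dotProduct_sub, Matrix.one_mulVec,
        ← Matrix.mulVec_mulVec, hMT, Matrix.neg_mulVec, dotProduct_neg,
        ← hy, hdot, neg_neg, hyy]
      congr 1
      simp [dotProduct, sq]
    simp only [star_trivial]
    rw [hexp]
    exact hreal


end
end
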